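/- arXiv:2006.10568 — 4 statements merged into one kernel-verified Lean document; each statement's English description precedes it below -/
import Mathlib

section
/- Assume p(A) is a compact operator and that there exist constants C > 0 and d > 0 such that 𝒩(p(A), {μ ∈ ℝ : |μ| ≥ τ}) ≤ C·τ^(−d) for every τ ∈ (0,1]. Then there exist δ₀ > 0 and C' > 0 such that for every ι ∈ {1,…,L} and every τ ∈ (0, δ₀) one has 𝒩(A, {μ ∈ ℝ : τ ≤ |μ − ω_ι| ≤ δ₀}) ≤ C'·τ^(−d). (Abstract form of the paper's Proposition on the rough eigenvalue estimate near points of the essential spectrum.) -/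
open scoped ENNReal
open Filter Topology

/-- The number of eigenvalues of `T` in a set `S ⊆ ℝ`, counted with multiplicity:
the dimension (a natural number or `∞`, viewed in `ℝ≥0∞`) of the closed linear span
of the eigenspaces `ker (T - μ)` over `μ ∈ S`. -/
noncomputable def eigCount {H : Type*} [NormedAddCommGroup H] [InnerProductSpace ℂ H]
    (T : H →L[ℂ] H) (S : Set ℝ) : ℝ≥0∞ :=
  ((Cardinal.toENat (Module.rank ℂ
      (⨆ μ ∈ S, Module.End.eigenspace (T : H →ₗ[ℂ] H) (μ : ℂ)).topologicalClosure)) : ℝ≥0∞)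

lemma prod_eig_apply {H : Type*} [NormedAddCommGroup H] [InnerProductSpace ℂ H]
    (A : H →L[ℂ] H) (μ : ℂ) (v : H) (hv : A v = μ • v) (l : List ℂ) :
    ((l.map fun a => A - a • (1 : H →L[ℂ] H)).prod) v = ((l.map fun a => μ - a).prod) • v := by
  induction l with
  | nil => simp
  | cons a l ih =>
    simp only [List.map_cons, List.prod_cons, ContinuousLinearMap.mul_apply, ih, map_smul,
      ContinuousLinearMap.sub_apply, ContinuousLinearMap.one_apply, hv,
      ContinuousLinearMap.smul_apply]
    rw [← sub_smul, smul_smul, mul_comm]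

lemma eigCount_mono {H : Type*} [NormedAddCommGroup H] [InnerProductSpace ℂ H]
    (A B : H →L[ℂ] H) {S S' : Set ℝ}
    (h : ∀ μ ∈ S, ∃ ν ∈ S',
      Module.End.eigenspace (A : H →ₗ[ℂ] H) (μ : ℂ) ≤
      Module.End.eigenspace (B : H →ₗ[ℂ] H) (ν : ℂ)) :
    eigCount A S ≤ eigCount B S' := by
  unfold eigCount
  have hsub : (⨆ μ ∈ S, Module.End.eigenspace (A : H →ₗ[ℂ] H) (μ : ℂ)) ≤
      (⨆ ν ∈ S', Module.End.eigenspace (B : H →ₗ[ℂ] H) (ν : ℂ)) := by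
    refine iSup₂_le fun μ hμ => ?_
    obtain ⟨ν, hν, hle⟩ := h μ hμ
    exact hle.trans (le_iSup₂_of_le ν hν le_rfl)
  have := Submodule.rank_mono (Submodule.topologicalClosure_mono hsub)
  exact_mod_cast OrderHomClass.mono Cardinal.toENat this

/-- If `p(A)` is compact and `𝒩(p(A), {|μ| ≥ τ}) ≤ C τ^(-d)` for `τ ∈ (0,1]`, then there are
`δ₀ > 0` and `C' > 0` with `𝒩(A, {τ ≤ |μ - ω_ι| ≤ δ₀}) ≤ C' τ^(-d)` for all `ι` and
`τ ∈ (0, δ₀)`. -/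
theorem rough_eigenvalue_estimate
    {H : Type*} [NormedAddCommGroup H] [InnerProductSpace ℂ H] [CompleteSpace H]
    {L : ℕ} (hL : 0 < L) (ω : Fin L → ℝ) (hω : StrictMono ω)
    (A : H →L[ℂ] H) (hA : IsSelfAdjoint A)
    (pA : H →L[ℂ] H)
    (hpA : pA = (List.ofFn fun ι : Fin L => A - (ω ι : ℂ) • 1).prod)
    (hcpt : IsCompactOperator pA)
    (C d : ℝ) (hC : 0 < C) (hd : 0 < d)
    (hbound : ∀ τ : ℝ, 0 < τ → τ ≤ 1 →
      eigCount pA {μ : ℝ | τ ≤ |μ|} ≤ ENNReal.ofReal (C * τ ^ (-d))) :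
    ∃ δ₀ > (0 : ℝ), ∃ C' > (0 : ℝ), ∀ ι : Fin L, ∀ τ : ℝ, 0 < τ → τ < δ₀ →
      eigCount A {μ : ℝ | τ ≤ |μ - ω ι| ∧ |μ - ω ι| ≤ δ₀} ≤ ENNReal.ofReal (C' * τ ^ (-d)) := by
  classical
  obtain ⟨g, hgpos, hgle⟩ : ∃ g > (0 : ℝ), ∀ ι κ : Fin L, ι ≠ κ → g ≤ |ω ι - ω κ| := by
    have hne : (Finset.univ : Finset (Fin L × Fin L)).Nonempty :=
      ⟨(⟨0, hL⟩, ⟨0, hL⟩), Finset.mem_univ _⟩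
    refine ⟨Finset.univ.inf' hne
      (fun p : Fin L × Fin L => if p.1 = p.2 then 1 else |ω p.1 - ω p.2|), ?_, ?_⟩
    · rw [gt_iff_lt, Finset.lt_inf'_iff]
      intro p _
      split_ifs with h
      · norm_num
      · exact abs_pos.mpr (sub_ne_zero.mpr fun he => h (hω.injective he))
    · intro ι κ h
      have := Finset.inf'_le
        (fun p : Fin L × Fin L => if p.1 = p.2 then 1 else |ω p.1 - ω p.2|)
        (Finset.mem_univ (ι, κ))
      simp only [h, ↓reduceIte] at this
      exact this
  set δ₀ : ℝ := min (g / 2) 1 with hδdef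
  set c : ℝ := min 1 ((g / 2) ^ (L - 1)) with hcdef
  have hδ₀ : 0 < δ₀ := lt_min (by positivity) one_pos
  have hδg : δ₀ ≤ g / 2 := min_le_left _ _
  have hδ1 : δ₀ ≤ 1 := min_le_right _ _
  have hcpos : 0 < c := lt_min one_pos (by positivity)
  have hc1 : c ≤ 1 := min_le_left _ _
  refine ⟨δ₀, hδ₀, C * c ^ (-d), by positivity, ?_⟩
  intro ι τ hτ hτδ
  -- the key: every eigenvalue μ of A in the annulus gives eigenvalue P(μ) of pA with |P(μ)| ≥ c·τ
  have key : eigCount A {μ : ℝ | τ ≤ |μ - ω ι| ∧ |μ - ω ι| ≤ δ₀} ≤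
      eigCount pA {ν : ℝ | c * τ ≤ |ν|} := by
    apply eigCount_mono
    rintro μ ⟨hμ1, hμ2⟩
    refine ⟨∏ κ : Fin L, (μ - ω κ), ?_, ?_⟩
    · -- |∏ (μ - ω κ)| ≥ c * τ
      show c * τ ≤ |∏ κ : Fin L, (μ - ω κ)|
      rw [Finset.abs_prod]
      rw [← Finset.mul_prod_erase Finset.univ _ (Finset.mem_univ ι)]
      have hκ : ∀ κ ∈ Finset.univ.erase ι, g / 2 ≤ |μ - ω κ| := by
        intro κ hκmem
        have hκι : κ ≠ ι := Finset.ne_of_mem_erase hκmem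
        have h1 : g ≤ |ω κ - ω ι| := hgle κ ι hκι
        have h2 : |ω κ - ω ι| ≤ |μ - ω κ| + |μ - ω ι| := by
          have := abs_sub_abs_le_abs_sub (μ - ω ι) (μ - ω κ)
          have htri := abs_sub (μ - ω κ) (μ - ω ι)
          calc |ω κ - ω ι| = |(μ - ω ι) - (μ - ω κ)| := by ring_nf
            _ ≤ |μ - ω ι| + |μ - ω κ| := abs_sub _ _
            _ = |μ - ω κ| + |μ - ω ι| := by ring
        nlinarith [hμ2.trans hδg]
      have hprod : (g / 2) ^ (L - 1) ≤ ∏ κ ∈ Finset.univ.erase ι, |μ - ω κ| := by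
        have hcard : (Finset.univ.erase ι).card = L - 1 := by
          rw [Finset.card_erase_of_mem (Finset.mem_univ ι), Finset.card_univ, Fintype.card_fin]
        calc (g / 2) ^ (L - 1) = ∏ _κ ∈ Finset.univ.erase ι, (g / 2) := by
              rw [Finset.prod_const, hcard]
          _ ≤ ∏ κ ∈ Finset.univ.erase ι, |μ - ω κ| :=
              Finset.prod_le_prod (fun _ _ => by positivity) hκ
      calc c * τ ≤ (g / 2) ^ (L - 1) * τ := by
            apply mul_le_mul_of_nonneg_right (min_le_right _ _) hτ.le
        _ = τ * (g / 2) ^ (L - 1) := mul_comm _ _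
        _ ≤ |μ - ω ι| * ∏ κ ∈ Finset.univ.erase ι, |μ - ω κ| := by
            apply mul_le_mul hμ1 hprod (by positivity) (abs_nonneg _)
    · -- eigenspace inclusion
      intro v hv
      rw [Module.End.mem_eigenspace_iff] at hv ⊢
      have hv' : A v = (μ : ℂ) • v := hv
      have := prod_eig_apply A (μ : ℂ) v hv' ((List.finRange L).map fun κ => ((ω κ : ℝ) : ℂ))
      rw [List.map_map, List.map_map] at this
      have hpAv : pA v = (((List.finRange L).map fun κ => (μ : ℂ) - (ω κ : ℝ)).prod) • v := by
        rw [hpA, List.ofFn_eq_map]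
        convert this using 3
        all_goals rfl
      show pA v = ((∏ κ : Fin L, (μ - ω κ) : ℝ) : ℂ) • v
      rw [hpAv]
      congr 1
      rw [← Fin.prod_univ_def]
      push_cast
      rfl
  refine key.trans ?_
  have hcτ1 : c * τ ≤ 1 := by
    have : c * τ ≤ 1 * τ := mul_le_mul_of_nonneg_right hc1 hτ.le
    nlinarith [hτδ.le.trans hδ1]
  have happ := hbound (c * τ) (by positivity) hcτ1
  refine happ.trans ?_
  apply ENNReal.ofReal_le_ofReal
  rw [Real.mul_rpow hcpos.le hτ.le, ← mul_assoc]
end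

section
/- Let A be a bounded self-adjoint operator on a complex Hilbert space H, let p be a nonconstant polynomial with real coefficients, and let μ ∈ ℝ. Then the eigenspace ker(p(A) − μ·I) equals the supremum (the span, which is a finite orthogonal direct sum) of the eigenspaces ker(A − t·I) over all real numbers t with p(t) = μ. -/
/-- The coercion from continuous linear endomorphisms to linear endomorphisms,
as an algebra homomorphism. -/
noncomputable def clmCoeAlgHom (H : Type*) [NormedAddCommGroup H] [InnerProductSpace ℂ H] :
    (H →L[ℂ] H) →ₐ[ℂ] (H →ₗ[ℂ] H) :=
  { ContinuousLinearMap.toLinearMapRingHom (R₁ := ℂ) (M₁ := H) with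
    commutes' := fun a => by
      ext x
      simp [Algebra.algebraMap_eq_smul_one] }

lemma coe_aeval_clm {H : Type*} [NormedAddCommGroup H] [InnerProductSpace ℂ H]
    (A : H →L[ℂ] H) (f : Polynomial ℂ) :
    ((Polynomial.aeval A f : H →L[ℂ] H) : H →ₗ[ℂ] H) = Polynomial.aeval (A : H →ₗ[ℂ] H) f :=
  (Polynomial.aeval_algHom_apply (clmCoeAlgHom H) A f).symm

open Polynomial in
lemma ker_aeval_finset_prod {M : Type*} [AddCommGroup M] [Module ℂ M] (f : M →ₗ[ℂ] M)
    {ι : Type*} [DecidableEq ι] (s : Finset ι) (g : ι → Polynomial ℂ)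
    (hco : ∀ i ∈ s, ∀ j ∈ s, i ≠ j → IsCoprime (g i) (g j)) :
    LinearMap.ker (Polynomial.aeval f (∏ i ∈ s, g i)) =
      ⨆ i ∈ s, LinearMap.ker (Polynomial.aeval f (g i)) := by
  induction s using Finset.induction_on with
  | empty => simp [Polynomial.aeval_one, Module.End.one_eq_id]
  | @insert a s ha ih =>
      rw [Finset.prod_insert ha,
        ← Polynomial.sup_ker_aeval_eq_ker_aeval_mul_of_coprime f
          (IsCoprime.prod_right fun j hj =>
            hco a (Finset.mem_insert_self a s) j (Finset.mem_insert_of_mem hj)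
              (fun h => ha (h ▸ hj))),
        ih (fun i hi j hj hij =>
          hco i (Finset.mem_insert_of_mem hi) j (Finset.mem_insert_of_mem hj) hij)]
      exact (Finset.iSup_insert a s
        (fun i => LinearMap.ker (Polynomial.aeval f (g i)))).symm

lemma isSymmetric_sub_real_smul {H : Type*} [NormedAddCommGroup H] [InnerProductSpace ℂ H]
    {L : H →ₗ[ℂ] H} (hL : L.IsSymmetric) (z : ℂ) (hz : z.im = 0) :
    (L - z • 1).IsSymmetric := fun x y => by
  have hconj : (starRingEnd ℂ) z = z := Complex.conj_eq_iff_im.mpr hz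
  simp only [LinearMap.sub_apply, LinearMap.smul_apply, Module.End.one_apply,
    inner_sub_left, inner_sub_right, inner_smul_left, inner_smul_right, hL x y, hconj]

/-- For a symmetric operator `B`, `ker (B ^ m) = ker B` when `0 < m`. -/
lemma ker_pow_eq_ker_of_isSymmetric {H : Type*} [NormedAddCommGroup H] [InnerProductSpace ℂ H]
    {B : H →ₗ[ℂ] H} (hB : B.IsSymmetric) {m : ℕ} (hm : 0 < m) :
    LinearMap.ker (B ^ m) = LinearMap.ker B := by
  have key : ∀ x : H, B (B x) = 0 → B x = 0 := by
    intro x hx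
    have h : (inner ℂ (B x) (B x) : ℂ) = 0 := by rw [hB x (B x), hx, inner_zero_right]
    exact inner_self_eq_zero.mp h
  obtain ⟨k, rfl⟩ : ∃ k, m = k + 1 := ⟨m - 1, (Nat.succ_pred_eq_of_pos hm).symm⟩
  clear hm
  induction k with
  | zero => rw [pow_one]
  | succ k ih =>
      apply le_antisymm
      · intro x hx
        rw [LinearMap.mem_ker] at hx
        rw [← ih]
        rw [LinearMap.mem_ker]
        have : B (B ((B ^ k) x)) = 0 := by
          rw [pow_succ', pow_succ'] at hx
          simpa using hx
        have := key _ this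
        rw [pow_succ']
        simpa using this
      · intro x hx
        rw [LinearMap.mem_ker] at hx ⊢
        have h1 : B ^ (k + 1 + 1) = B ^ (k + 1) * B := pow_succ B (k + 1)
        rw [h1, Module.End.mul_apply, hx, map_zero]

lemma ker_pow_eq_bot {H : Type*} [AddCommGroup H] [Module ℂ H]
    {B : H →ₗ[ℂ] H} (hB : LinearMap.ker B = ⊥) (m : ℕ) :
    LinearMap.ker (B ^ m) = ⊥ := by
  induction m with
  | zero => simp [Module.End.one_eq_id]
  | succ k ih =>
      rw [LinearMap.ker_eq_bot'] at ih ⊢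
      intro x hx
      rw [pow_succ'] at hx
      exact ih x ((LinearMap.ker_eq_bot'.mp hB) _ (by simpa using hx))

/-- For a bounded self-adjoint operator `A` and a nonconstant real polynomial `p`, the
eigenspace of `p(A)` for a real eigenvalue `μ` is the span of the eigenspaces of `A`
for the real numbers `t` with `p(t) = μ`. -/
theorem eigenspace_polynomial_eq_iSup
    {H : Type*} [NormedAddCommGroup H] [InnerProductSpace ℂ H] [CompleteSpace H]
    (A : H →L[ℂ] H) (hA : IsSelfAdjoint A)
    (p : Polynomial ℝ) (hp : 0 < p.natDegree) (μ : ℝ) :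
    Module.End.eigenspace
        (((Polynomial.aeval A (p.map (algebraMap ℝ ℂ)) : H →L[ℂ] H)) : H →ₗ[ℂ] H) (μ : ℂ)
      = ⨆ t : {t : ℝ // p.eval t = μ},
          Module.End.eigenspace (A : H →ₗ[ℂ] H) ((t : ℝ) : ℂ) := by
  classical
  open Polynomial in
  set L := (A : H →ₗ[ℂ] H) with hLdef
  have hL : L.IsSymmetric := hA.isSymmetric
  set q : ℝ[X] := p - Polynomial.C μ with hqdef
  have hqd : q.natDegree = p.natDegree := Polynomial.natDegree_sub_C
  have hq0 : q ≠ 0 := by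
    intro h
    rw [h, Polynomial.natDegree_zero] at hqd
    omega
  set Q : ℂ[X] := q.map (algebraMap ℝ ℂ) with hQdef
  have hQ0 : Q ≠ 0 := (Polynomial.map_ne_zero_iff (algebraMap ℝ ℂ).injective).mpr hq0
  -- evaluation of Q at real points
  have hevalQ : ∀ t : ℝ, Q.eval ((t : ℝ) : ℂ) = ((q.eval t : ℝ) : ℂ) := by
    intro t
    rw [hQdef, Polynomial.eval_map]
    exact Polynomial.eval₂_at_apply (algebraMap ℝ ℂ) t
  -- the eigenspace of p(A) is the kernel of Q(A)
  have hker : Module.End.eigenspace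
      (((Polynomial.aeval A (p.map (algebraMap ℝ ℂ)) : H →L[ℂ] H)) : H →ₗ[ℂ] H) (μ : ℂ)
      = LinearMap.ker (Polynomial.aeval L Q) := by
    rw [Module.End.eigenspace_def, coe_aeval_clm]
    congr 1
    rw [hQdef, hqdef, Polynomial.map_sub, map_sub, Polynomial.map_C, Polynomial.aeval_C]
    simp [Algebra.algebraMap_eq_smul_one]
    rfl
  rw [hker]
  -- factor Q over ℂ
  have hsplits : Q.Splits := IsAlgClosed.splits Q
  have hcard : Multiset.card Q.roots = Q.natDegree :=
    (Polynomial.splits_iff_card_roots).mp hsplits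
  have hfact : Q = Polynomial.C Q.leadingCoeff *
      ∏ z ∈ Q.roots.toFinset, (Polynomial.X - Polynomial.C z) ^ Q.rootMultiplicity z := by
    conv_lhs => rw [← Polynomial.C_leadingCoeff_mul_prod_multiset_X_sub_C hcard]
    rw [Polynomial.prod_multiset_root_eq_finset_root]
  have hlc : Q.leadingCoeff ≠ 0 := Polynomial.leadingCoeff_ne_zero.mpr hQ0
  have hkerQ : LinearMap.ker (Polynomial.aeval L Q)
      = ⨆ z ∈ Q.roots.toFinset,
          LinearMap.ker (Polynomial.aeval L
            ((Polynomial.X - Polynomial.C z) ^ Q.rootMultiplicity z)) := by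
    conv_lhs => rw [hfact]
    rw [map_mul, Polynomial.aeval_C, Algebra.algebraMap_eq_smul_one, smul_mul_assoc, one_mul,
      LinearMap.ker_smul _ _ hlc]
    exact ker_aeval_finset_prod L _ _ (fun i _ j _ hij =>
      (Polynomial.pairwise_coprime_X_sub_C (Function.injective_id) hij).pow)
  rw [hkerQ]
  -- auxiliary computation of the single kernels
  have haeval : ∀ z : ℂ, ∀ m : ℕ,
      Polynomial.aeval L ((Polynomial.X - Polynomial.C z) ^ m) = (L - z • 1) ^ m := by
    intro z m
    rw [map_pow, map_sub, Polynomial.aeval_X, Polynomial.aeval_C,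
      Algebra.algebraMap_eq_smul_one]
  -- for nonreal z the kernel vanishes
  have hnonreal : ∀ z : ℂ, z.im ≠ 0 → ∀ m : ℕ,
      LinearMap.ker (Polynomial.aeval L ((Polynomial.X - Polynomial.C z) ^ m)) = ⊥ := by
    intro z hz m
    rw [haeval]
    apply ker_pow_eq_bot
    by_contra h
    have hev : Module.End.HasEigenvalue L z := by
      rw [Module.End.hasEigenvalue_iff, Module.End.eigenspace_def]
      exact h
    have := hL.conj_eigenvalue_eq_self hev
    rw [Complex.conj_eq_iff_im] at this
    exact hz this
  -- for real z the kernel is the eigenspace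
  have hreal : ∀ z : ℂ, z.im = 0 → ∀ m : ℕ, 0 < m →
      LinearMap.ker (Polynomial.aeval L ((Polynomial.X - Polynomial.C z) ^ m))
        = Module.End.eigenspace L z := by
    intro z hz m hm
    rw [haeval, ker_pow_eq_ker_of_isSymmetric (isSymmetric_sub_real_smul hL z hz) hm,
      Module.End.eigenspace_def]
  apply le_antisymm
  · refine iSup₂_le fun z hz => ?_
    rw [Multiset.mem_toFinset, Polynomial.mem_roots hQ0] at hz
    by_cases him : z.im = 0
    · have hzre : z = ((z.re : ℝ) : ℂ) := by
        apply Complex.ext <;> simp [him]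
      have hmult : 0 < Q.rootMultiplicity z :=
        (Polynomial.rootMultiplicity_pos hQ0).mpr hz
      rw [hreal z him _ hmult]
      have hpz : p.eval z.re = μ := by
        have h0 : Q.eval z = 0 := hz
        rw [hzre, hevalQ] at h0
        have : q.eval z.re = 0 := by exact_mod_cast h0
        rw [hqdef] at this
        simp only [Polynomial.eval_sub, Polynomial.eval_C, sub_eq_zero] at this
        exact this
      have : Module.End.eigenspace L z = Module.End.eigenspace L ((z.re : ℝ) : ℂ) := by
        rw [← hzre]
      rw [this]
      exact le_iSup (fun t : {t : ℝ // p.eval t = μ} =>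
        Module.End.eigenspace L ((t : ℝ) : ℂ)) ⟨z.re, hpz⟩
    · rw [hnonreal z him]
      exact bot_le
  · refine iSup_le fun t => ?_
    obtain ⟨t, ht⟩ := t
    have hroot : ((t : ℝ) : ℂ) ∈ Q.roots.toFinset := by
      rw [Multiset.mem_toFinset, Polynomial.mem_roots hQ0]
      show Q.eval _ = 0
      rw [hevalQ, hqdef]
      simp [ht]
    have hmult : 0 < Q.rootMultiplicity ((t : ℝ) : ℂ) :=
      (Polynomial.rootMultiplicity_pos hQ0).mpr
        ((Polynomial.mem_roots hQ0).mp (Multiset.mem_toFinset.mp hroot))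
    have : Module.End.eigenspace L ((t : ℝ) : ℂ)
        = LinearMap.ker (Polynomial.aeval L
            ((Polynomial.X - Polynomial.C ((t : ℝ) : ℂ)) ^ Q.rootMultiplicity ((t : ℝ) : ℂ))) :=
      (hreal _ (by simp) _ hmult).symm
    rw [this]
    exact le_biSup (fun z => LinearMap.ker (Polynomial.aeval L
      ((Polynomial.X - Polynomial.C z) ^ Q.rootMultiplicity z))) hroot
end

section
/- Let H be a complex Hilbert space, let T : H → H be a bounded self-adjoint operator that is positive and invertible, and let K : H → H be a bounded operator satisfying K ∘ T = T ∘ K*, where K* is the Hilbert-space adjoint of K. Then the spectrum of K is contained in ℝ. -/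
open scoped NNReal in
/-- If `T` is a positive invertible self-adjoint operator and `K` satisfies
`K ∘ T = T ∘ K*`, then the spectrum of `K` is real. -/
theorem symmetrizable_spectrum_real
    {H : Type*} [NormedAddCommGroup H] [InnerProductSpace ℂ H] [CompleteSpace H]
    (T : H →L[ℂ] H) (hTpos : T.IsPositive) (hTunit : IsUnit T)
    (K : H →L[ℂ] H) (hPlemelj : K * T = T * ContinuousLinearMap.adjoint K) :
    ∀ z ∈ spectrum ℂ K, z.im = 0 := by
  intro z hz
  have hT : (0 : H →L[ℂ] H) ≤ T := (ContinuousLinearMap.nonneg_iff_isPositive T).mpr hTpos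
  have hspec : (0 : ℝ≥0) ∉ spectrum ℝ≥0 T := spectrum.zero_notMem ℝ≥0 hTunit
  set S : H →L[ℂ] H := T ^ ((1 : ℝ)/2) with hS
  set S' : H →L[ℂ] H := T ^ (-((1 : ℝ)/2)) with hS'
  have hSS' : S * S' = 1 := CFC.rpow_mul_rpow_neg _ (hTunit.isStrictlyPositive hT)
  have hS'S : S' * S = 1 := CFC.rpow_neg_mul_rpow _ (hTunit.isStrictlyPositive hT)
  have hSnn : (0 : H →L[ℂ] H) ≤ S := CFC.rpow_nonneg
  have hS'nn : (0 : H →L[ℂ] H) ≤ S' := CFC.rpow_nonneg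
  have hSsa : IsSelfAdjoint S := IsSelfAdjoint.of_nonneg hSnn
  have hS'sa : IsSelfAdjoint S' := IsSelfAdjoint.of_nonneg hS'nn
  have hSS : S * S = T := by
    rw [hS, ← CFC.rpow_add hTunit]
    norm_num
    exact CFC.rpow_one T hT
  have hSl : S = S' * T := by rw [← hSS, ← mul_assoc, hS'S, one_mul]
  have hSr : S = T * S' := by rw [← hSS, mul_assoc, hSS', mul_one]
  set u : (H →L[ℂ] H)ˣ := ⟨S, S', hSS', hS'S⟩ with hu
  set A : H →L[ℂ] H := S' * K * S with hA
  have key : S * ContinuousLinearMap.adjoint K * S' = S' * K * S := by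
    calc S * ContinuousLinearMap.adjoint K * S'
        = S' * (T * ContinuousLinearMap.adjoint K) * S' := by
          rw [hSl]; simp only [mul_assoc]
      _ = S' * (K * T) * S' := by rw [hPlemelj]
      _ = S' * K * (T * S') := by simp only [mul_assoc]
      _ = S' * K * S := by rw [← hSr]
  have hAsa : IsSelfAdjoint A := by
    show star A = A
    rw [hA, star_mul, star_mul, hSsa.star_eq, hS'sa.star_eq,
      ContinuousLinearMap.star_eq_adjoint, ← mul_assoc]
    exact key
  have hconj : spectrum ℂ A = spectrum ℂ K := by
    have : A = ↑u⁻¹ * K * ↑u := by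
      rw [hA]
      rfl
    rw [this, spectrum.units_conjugate']
  rw [← hconj] at hz
  exact hAsa.im_eq_zero_of_mem_spectrum hz
end

section
/- Fix q ∈ {1,2,3} and define u : ℝ³∖{0} → ℝ³ by u_p(x) = λ'·δ_{pq}/|x| + μ'·x_p·x_q/|x|³ (the q-th column of the Kelvin matrix). Then u solves the homogeneous Lamé–Navier system away from the origin: for every x ∈ ℝ³∖{0} and every p ∈ {1,2,3}, μ·(Δu_p)(x) + (λ+μ)·∂_p(∂₁u₁ + ∂₂u₂ + ∂₃u₃)(x) = 0. (The Kelvin matrix is a fundamental solution of the Lamé operator.) -/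
/-- Partial derivative in the `i`-th coordinate direction of a scalar function on `ℝ³`. -/
noncomputable def pd (f : EuclideanSpace ℝ (Fin 3) → ℝ) (i : Fin 3)
    (x : EuclideanSpace ℝ (Fin 3)) : ℝ :=
  fderiv ℝ f x (EuclideanSpace.single i 1)

/-- The `p`-th component of the `q`-th column of the Kelvin matrix,
`u_p(x) = λ'·δ_{pq}/|x| + μ'·x_p·x_q/|x|³`. -/
noncomputable def kelvinColumn (lam mu : ℝ) (q p : Fin 3)
    (x : EuclideanSpace ℝ (Fin 3)) : ℝ :=
  ((lam + 3 * mu) / (4 * Real.pi * mu * (lam + 2 * mu))) * (if p = q then 1 else 0) / ‖x‖ +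
    ((lam + mu) / (4 * Real.pi * mu * (lam + 2 * mu))) * x p * x q / ‖x‖ ^ 3

open Real

abbrev E3 := EuclideanSpace ℝ (Fin 3)

lemma hasFDerivAt_normE {x : E3} (hx : x ≠ 0) :
    HasFDerivAt (fun y : E3 => ‖y‖) (‖x‖⁻¹ • innerSL ℝ x) x := by
  have h1 : HasFDerivAt (fun y : E3 => ‖y‖ ^ 2) (2 • innerSL ℝ x) x :=
    (hasStrictFDerivAt_norm_sq x).hasFDerivAt
  have hn : ‖x‖ ≠ 0 := norm_ne_zero_iff.mpr hx
  have h2 := (Real.hasDerivAt_sqrt (by positivity : ‖x‖ ^ 2 ≠ 0)).comp_hasFDerivAt x h1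
  have h3 : ((fun x => √x) ∘ fun y : E3 => ‖y‖ ^ 2) = fun y : E3 => ‖y‖ := by
    funext y; simp [Function.comp, Real.sqrt_sq (norm_nonneg y)]
  rw [h3] at h2
  have h4 : ‖x‖⁻¹ • innerSL ℝ x = (1 / (2 * √(‖x‖ ^ 2))) • 2 • (innerSL ℝ x) := by
    rw [Real.sqrt_sq (norm_nonneg x)]
    ext y
    simp only [ContinuousLinearMap.smul_apply, smul_eq_mul]
    field_simp
    ring
  rw [h4]; exact h2

lemma hasFDerivAt_invnorm {x : E3} (hx : x ≠ 0) (n : ℕ) :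
    HasFDerivAt (fun y : E3 => (‖y‖ ^ (n+1))⁻¹)
      ((-((n:ℝ)+1) / ‖x‖ ^ (n+3)) • innerSL ℝ x) x := by
  have hn : ‖x‖ ≠ 0 := norm_ne_zero_iff.mpr hx
  have h1 := ((hasDerivAt_pow (n+1) ‖x‖).inv (by positivity)).comp_hasFDerivAt x
    (hasFDerivAt_normE hx)
  have h2 : ((fun t : ℝ => t ^ (n+1))⁻¹ ∘ fun y : E3 => ‖y‖)
      = fun y : E3 => (‖y‖ ^ (n+1))⁻¹ := rfl
  rw [h2] at h1
  refine h1.congr_fderiv ?_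
  rw [smul_smul]
  congr 1
  push_cast
  field_simp
  ring

lemma hasFDerivAt_invnorm1 {x : E3} (hx : x ≠ 0) :
    HasFDerivAt (fun y : E3 => ‖y‖⁻¹) ((-1 / ‖x‖ ^ 3) • innerSL ℝ x) x := by
  have := hasFDerivAt_invnorm hx 0; norm_num at this ⊢; exact this

lemma hasFDerivAt_invnorm3 {x : E3} (hx : x ≠ 0) :
    HasFDerivAt (fun y : E3 => (‖y‖ ^ 3)⁻¹) ((-3 / ‖x‖ ^ 5) • innerSL ℝ x) x := by
  have := hasFDerivAt_invnorm hx 2; norm_num at this ⊢; exact this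

lemma hasFDerivAt_invnorm5 {x : E3} (hx : x ≠ 0) :
    HasFDerivAt (fun y : E3 => (‖y‖ ^ 5)⁻¹) ((-5 / ‖x‖ ^ 7) • innerSL ℝ x) x := by
  have := hasFDerivAt_invnorm hx 4; norm_num at this ⊢; exact this

lemma pd_eq {f : E3 → ℝ} {L : E3 →L[ℝ] ℝ} {x : E3} (h : HasFDerivAt f L x) (i : Fin 3) :
    pd f i x = L (EuclideanSpace.single i 1) := by rw [pd, h.fderiv]

lemma hasFDerivAt_coord (x : E3) (a : Fin 3) :
    HasFDerivAt (fun y : E3 => y a) (EuclideanSpace.proj a : E3 →L[ℝ] ℝ) x :=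
  (EuclideanSpace.proj a : E3 →L[ℝ] ℝ).hasFDerivAt

/-- shape `y a / ‖y‖³` -/
noncomputable def AA (a : Fin 3) (y : E3) : ℝ := y a * (‖y‖ ^ 3)⁻¹
/-- shape `y a y b y c / ‖y‖⁵` -/
noncomputable def BB (a b c : Fin 3) (y : E3) : ℝ := y a * y b * y c * (‖y‖ ^ 5)⁻¹

lemma hasFDerivAt_AA {x : E3} (hx : x ≠ 0) (a : Fin 3) :
    HasFDerivAt (AA a)
      (x a • ((-3 / ‖x‖ ^ 5) • innerSL ℝ x) + (‖x‖ ^ 3)⁻¹ • (EuclideanSpace.proj a : E3 →L[ℝ] ℝ)) x :=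
  (hasFDerivAt_coord x a).mul (hasFDerivAt_invnorm3 hx)

lemma pd_AA {x : E3} (hx : x ≠ 0) (a j : Fin 3) :
    pd (AA a) j x = (if a = j then 1 else 0) * (‖x‖ ^ 3)⁻¹ - 3 * x a * x j * (‖x‖ ^ 5)⁻¹ := by
  rw [pd_eq (hasFDerivAt_AA hx a) j]
  simp [EuclideanSpace.single_apply, EuclideanSpace.inner_single_right, real_inner_comm]
  split_ifs <;> ring

lemma hasFDerivAt_BB {x : E3} (hx : x ≠ 0) (a b c : Fin 3) :
    HasFDerivAt (BB a b c)
      ((x a * x b * x c) • ((-5 / ‖x‖ ^ 7) • innerSL ℝ x) +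
        (‖x‖ ^ 5)⁻¹ • ((x a * x b) • (EuclideanSpace.proj c : E3 →L[ℝ] ℝ) +
          x c • (x a • (EuclideanSpace.proj b : E3 →L[ℝ] ℝ) +
            x b • (EuclideanSpace.proj a : E3 →L[ℝ] ℝ)))) x :=
  (((hasFDerivAt_coord x a).mul (hasFDerivAt_coord x b)).mul (hasFDerivAt_coord x c)).mul
    (hasFDerivAt_invnorm5 hx)

lemma pd_BB {x : E3} (hx : x ≠ 0) (a b c j : Fin 3) :
    pd (BB a b c) j x =
      ((if a = j then 1 else 0) * x b * x c + (if b = j then 1 else 0) * x a * x c +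
        (if c = j then 1 else 0) * x a * x b) * (‖x‖ ^ 5)⁻¹ -
        5 * x a * x b * x c * x j * (‖x‖ ^ 7)⁻¹ := by
  rw [pd_eq (hasFDerivAt_BB hx a b c) j]
  simp [EuclideanSpace.single_apply, EuclideanSpace.inner_single_right, real_inner_comm]
  split_ifs <;> ring

/-- Explicit formula for the gradient components of `kelvinColumn`. -/
noncomputable def KG (lam mu : ℝ) (q p i : Fin 3) (y : E3) : ℝ :=
  (-((lam + 3 * mu) / (4 * Real.pi * mu * (lam + 2 * mu)) * (if p = q then 1 else 0))) * AA i y +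
    ((lam + mu) / (4 * Real.pi * mu * (lam + 2 * mu))) *
      ((if p = i then 1 else 0) * AA q y + (if q = i then 1 else 0) * AA p y -
        3 * BB p q i y)

lemma pd_kelvin (lam mu : ℝ) (q p : Fin 3) {x : E3} (hx : x ≠ 0) (i : Fin 3) :
    pd (kelvinColumn lam mu q p) i x = KG lam mu q p i x := by
  set c1 : ℝ := (lam + 3 * mu) / (4 * Real.pi * mu * (lam + 2 * mu)) with hc1
  set c2 : ℝ := (lam + mu) / (4 * Real.pi * mu * (lam + 2 * mu)) with hc2
  have h : HasFDerivAt (kelvinColumn lam mu q p)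
      ((c1 * (if p = q then 1 else 0)) • ((-1 / ‖x‖ ^ 3) • innerSL ℝ x) +
        (((c2 * x p * x q) • ((-3 / ‖x‖ ^ 5) • innerSL ℝ x)) +
          (‖x‖ ^ 3)⁻¹ • ((c2 * x p) • (EuclideanSpace.proj q : E3 →L[ℝ] ℝ) +
            x q • (c2 • (EuclideanSpace.proj p : E3 →L[ℝ] ℝ))))) x := by
    have h1 := ((hasFDerivAt_invnorm1 hx).const_mul (c1 * (if p = q then 1 else 0))).add
      ((((hasFDerivAt_coord x p).const_mul c2).mul (hasFDerivAt_coord x q)).mul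
        (hasFDerivAt_invnorm3 hx))
    exact h1
  rw [pd_eq h i]
  simp only [KG, AA, BB, ContinuousLinearMap.add_apply, ContinuousLinearMap.smul_apply,
    ContinuousLinearMap.zero_apply, innerSL_apply_apply, smul_eq_mul, PiLp.proj_apply,
    EuclideanSpace.single_apply, EuclideanSpace.inner_single_right, conj_trivial, one_mul]
  split_ifs <;> ring

lemma diff_AA {x : E3} (hx : x ≠ 0) (a : Fin 3) : DifferentiableAt ℝ (AA a) x :=
  (hasFDerivAt_AA hx a).differentiableAt

lemma diff_BB {x : E3} (hx : x ≠ 0) (a b c : Fin 3) : DifferentiableAt ℝ (BB a b c) x :=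
  (hasFDerivAt_BB hx a b c).differentiableAt

lemma pd_congr {f g : E3 → ℝ} {x : E3} (hx : x ≠ 0)
    (h : ∀ y : E3, y ≠ 0 → f y = g y) (i : Fin 3) : pd f i x = pd g i x := by
  have hev : f =ᶠ[nhds x] g := by
    filter_upwards [isOpen_compl_singleton.mem_nhds (by simpa using hx)] with y hy
    exact h y (by simpa using hy)
  rw [pd, pd, hev.fderiv_eq]

/-- second derivatives of the Kelvin column -/
lemma pd_pd_kelvin (lam mu : ℝ) (q p : Fin 3) {x : E3} (hx : x ≠ 0) (i j : Fin 3) :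
    pd (pd (kelvinColumn lam mu q p) i) j x =
      (-((lam + 3 * mu) / (4 * Real.pi * mu * (lam + 2 * mu)) * (if p = q then 1 else 0))) *
          ((if i = j then 1 else 0) * (‖x‖ ^ 3)⁻¹ - 3 * x i * x j * (‖x‖ ^ 5)⁻¹) +
        ((lam + mu) / (4 * Real.pi * mu * (lam + 2 * mu))) *
          ((if p = i then 1 else 0) *
              ((if q = j then 1 else 0) * (‖x‖ ^ 3)⁻¹ - 3 * x q * x j * (‖x‖ ^ 5)⁻¹) +
            (if q = i then 1 else 0) *
              ((if p = j then 1 else 0) * (‖x‖ ^ 3)⁻¹ - 3 * x p * x j * (‖x‖ ^ 5)⁻¹) -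
            3 * (((if p = j then 1 else 0) * x q * x i + (if q = j then 1 else 0) * x p * x i +
                (if i = j then 1 else 0) * x p * x q) * (‖x‖ ^ 5)⁻¹ -
              5 * x p * x q * x i * x j * (‖x‖ ^ 7)⁻¹)) := by
  rw [pd_congr hx (fun y hy => pd_kelvin lam mu q p hy i) j]
  have h : HasFDerivAt (KG lam mu q p i) (_ : E3 →L[ℝ] ℝ) x :=
    ((hasFDerivAt_AA hx i).const_mul
        (-((lam + 3 * mu) / (4 * Real.pi * mu * (lam + 2 * mu)) * (if p = q then 1 else 0)))).add
      ((((hasFDerivAt_AA hx q).const_mul (if p = i then (1:ℝ) else 0)).add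
          ((hasFDerivAt_AA hx p).const_mul (if q = i then (1:ℝ) else 0))).sub
        ((hasFDerivAt_BB hx p q i).const_mul 3) |>.const_mul
        ((lam + mu) / (4 * Real.pi * mu * (lam + 2 * mu))))
  rw [pd_eq h j]
  simp only [ContinuousLinearMap.add_apply, ContinuousLinearMap.smul_apply,
    ContinuousLinearMap.sub_apply, ContinuousLinearMap.zero_apply, innerSL_apply_apply, smul_eq_mul,
    PiLp.proj_apply, EuclideanSpace.single_apply, EuclideanSpace.inner_single_right, conj_trivial,
    one_mul]
  split_ifs <;> ring

/-- the divergence of the Kelvin column -/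
lemma div_kelvin (lam mu : ℝ) (q : Fin 3) {y : E3} (hy : y ≠ 0) :
    ∑ l : Fin 3, pd (kelvinColumn lam mu q l) l y =
      ((lam + mu) / (4 * Real.pi * mu * (lam + 2 * mu)) -
        (lam + 3 * mu) / (4 * Real.pi * mu * (lam + 2 * mu))) * AA q y := by
  have hn : ‖y‖ ≠ 0 := norm_ne_zero_iff.mpr hy
  have hs : ‖y‖ ^ 2 = y 0 ^ 2 + y 1 ^ 2 + y 2 ^ 2 := by
    rw [EuclideanSpace.norm_eq, Real.sq_sqrt (by positivity)]
    simp [Fin.sum_univ_three, Real.norm_eq_abs, sq_abs]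
  have h35 : (‖y‖ ^ 3)⁻¹ = (y 0 ^ 2 + y 1 ^ 2 + y 2 ^ 2) * (‖y‖ ^ 5)⁻¹ := by
    rw [← hs]; field_simp
  rw [Fin.sum_univ_three, pd_kelvin lam mu q 0 hy 0, pd_kelvin lam mu q 1 hy 1,
    pd_kelvin lam mu q 2 hy 2]
  simp only [KG, AA, BB]
  fin_cases q <;>
    simp only [Fin.isValue, Fin.zero_eta, Fin.mk_one, Fin.reduceFinMk, Fin.reduceEq, reduceIte,
      one_mul, zero_mul, mul_zero, mul_one, add_zero, zero_add, mul_comm] <;>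
    rw [h35] <;> ring

/-- Each column of the Kelvin matrix solves the homogeneous Lamé–Navier system away from
the origin: `μ Δu_p + (λ+μ) ∂_p (div u) = 0` on `ℝ³ ∖ {0}`. -/
theorem kelvin_fundamental_solution
    (lam mu : ℝ) (hmu : 0 < mu) (hlam2mu : 0 < lam + 2 * mu) (q : Fin 3) :
    ∀ x : EuclideanSpace ℝ (Fin 3), x ≠ 0 → ∀ p : Fin 3,
      mu * (∑ i : Fin 3, pd (pd (kelvinColumn lam mu q p) i) i x) +
        (lam + mu) *
          pd (fun y => ∑ l : Fin 3, pd (kelvinColumn lam mu q l) l y) p x = 0 := by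
  intro x hx p
  have hn : ‖x‖ ≠ 0 := norm_ne_zero_iff.mpr hx
  have hs : ‖x‖ ^ 2 = x 0 ^ 2 + x 1 ^ 2 + x 2 ^ 2 := by
    rw [EuclideanSpace.norm_eq, Real.sq_sqrt (by positivity)]
    simp [Fin.sum_univ_three, Real.norm_eq_abs, sq_abs]
  have h37 : (‖x‖ ^ 3)⁻¹ = (x 0 ^ 2 + x 1 ^ 2 + x 2 ^ 2) ^ 2 * (‖x‖ ^ 7)⁻¹ := by
    rw [← hs]; field_simp
  have h57 : (‖x‖ ^ 5)⁻¹ = (x 0 ^ 2 + x 1 ^ 2 + x 2 ^ 2) * (‖x‖ ^ 7)⁻¹ := by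
    rw [← hs]; field_simp
  have hdiv : pd (fun y => ∑ l : Fin 3, pd (kelvinColumn lam mu q l) l y) p x =
      ((lam + mu) / (4 * Real.pi * mu * (lam + 2 * mu)) -
        (lam + 3 * mu) / (4 * Real.pi * mu * (lam + 2 * mu))) * pd (AA q) p x := by
    rw [pd_congr hx (fun y hy => div_kelvin lam mu q hy) p]
    have h := (hasFDerivAt_AA hx q).const_mul
      ((lam + mu) / (4 * Real.pi * mu * (lam + 2 * mu)) -
        (lam + 3 * mu) / (4 * Real.pi * mu * (lam + 2 * mu)))
    rw [pd_eq h p, pd_eq (hasFDerivAt_AA hx q) p]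
    simp [smul_eq_mul]
    split_ifs <;> ring
  have hsc : (lam + mu) * ((lam + mu) / (4 * Real.pi * mu * (lam + 2 * mu)) -
      (lam + 3 * mu) / (4 * Real.pi * mu * (lam + 2 * mu))) =
      -(2 * mu * ((lam + mu) / (4 * Real.pi * mu * (lam + 2 * mu)))) := by
    have hpi := Real.pi_ne_zero
    field_simp
    ring
  have hdiv2 : (lam + mu) *
      pd (fun y => ∑ l : Fin 3, pd (kelvinColumn lam mu q l) l y) p x =
      -(2 * mu * ((lam + mu) / (4 * Real.pi * mu * (lam + 2 * mu)))) * pd (AA q) p x := by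
    rw [hdiv, ← mul_assoc, hsc]
  rw [Fin.sum_univ_three, pd_pd_kelvin lam mu q p hx 0 0, pd_pd_kelvin lam mu q p hx 1 1,
    pd_pd_kelvin lam mu q p hx 2 2, hdiv2, pd_AA hx q p]
  fin_cases p <;> fin_cases q <;>
    simp only [Fin.isValue, Fin.zero_eta, Fin.mk_one, Fin.reduceFinMk, Fin.reduceEq, reduceIte,
      one_mul, zero_mul, mul_zero, mul_one, add_zero, zero_add, sub_zero, neg_zero, neg_mul] <;>
    (try rw [h37]) <;> (try rw [h57]) <;> ring
end
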